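/- Let n ≥ 1 and let a_1, …, a_n, b_1, …, b_n ∈ R. Then there exists x ∈ R with b_i ∣ x − a_i for all i = 1, …, n if and only if gcd(b_i, b_j) ∣ a_i − a_j for all i ≠ j. Moreover, if x and x' both satisfy b_i ∣ x − a_i for all i, then lcm(b_1, …, b_n) divides x − x'. -/

import Mathlib

section Assoc
open scoped Classical
variable {α : Type*} [CommMonoidWithZero α] [IsCancelMulZero α] [UniqueFactorizationMonoid α] [Nontrivial α]

private lemma my_factors_inf (a b : Associates α) : (a ⊓ b).factors = a.factors ⊓ b.factors :=
  Associates.prod_factors _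

private lemma my_factors_sup (a b : Associates α) : (a ⊔ b).factors = a.factors ⊔ b.factors :=
  Associates.prod_factors _

private lemma assoc_distrib (x y z : Associates α) : x ⊓ (y ⊔ z) ≤ (x ⊓ y) ⊔ (x ⊓ z) := by
  rw [← Associates.factors_le, my_factors_inf, my_factors_sup, my_factors_sup,
    my_factors_inf, my_factors_inf]
  exact le_of_eq (inf_sup_left _ _ _)
end Assoc

section GCD
variable {R : Type*} [CommMonoidWithZero R] [IsCancelMulZero R] [UniqueFactorizationMonoid R] [GCDMonoid R]
  [Nontrivial R]

private lemma my_mk_gcd (a b : R) :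
    Associates.mk (gcd a b) = Associates.mk a ⊓ Associates.mk b := by
  refine le_antisymm (le_inf (Associates.mk_le_mk_of_dvd (gcd_dvd_left a b))
    (Associates.mk_le_mk_of_dvd (gcd_dvd_right a b))) ?_
  obtain ⟨c, hc⟩ := Associates.mk_surjective (Associates.mk a ⊓ Associates.mk b)
  rw [← hc, Associates.mk_le_mk_iff_dvd]
  refine dvd_gcd ?_ ?_
  · rw [← Associates.mk_le_mk_iff_dvd, hc]; exact inf_le_left
  · rw [← Associates.mk_le_mk_iff_dvd, hc]; exact inf_le_right

private lemma my_mk_lcm (a b : R) :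
    Associates.mk (lcm a b) = Associates.mk a ⊔ Associates.mk b := by
  refine le_antisymm ?_ (sup_le (Associates.mk_le_mk_of_dvd (dvd_lcm_left a b))
    (Associates.mk_le_mk_of_dvd (dvd_lcm_right a b)))
  obtain ⟨c, hc⟩ := Associates.mk_surjective (Associates.mk a ⊔ Associates.mk b)
  rw [← hc, Associates.mk_le_mk_iff_dvd]
  refine lcm_dvd ?_ ?_
  · rw [← Associates.mk_le_mk_iff_dvd, hc]; exact le_sup_left
  · rw [← Associates.mk_le_mk_iff_dvd, hc]; exact le_sup_right

private lemma my_gcd_lcm_dvd (a b c : R) : gcd a (lcm b c) ∣ lcm (gcd a b) (gcd a c) := by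
  rw [← Associates.mk_le_mk_iff_dvd, my_mk_gcd, my_mk_lcm, my_mk_lcm,
    my_mk_gcd, my_mk_gcd]
  exact assoc_distrib _ _ _

/-- each element of a list divides the iterated lcm -/
private lemma my_dvd_foldr_lcm {l : List R} {r : R} (h : r ∈ l) : r ∣ l.foldr lcm 1 := by
  induction l with
  | nil => simp at h
  | cons x l ih =>
    rcases List.mem_cons.mp h with rfl | h
    · exact dvd_lcm_left _ _
    · exact (ih h).trans (dvd_lcm_right _ _)

private lemma my_foldr_lcm_dvd {l : List R} {m : R} (h : ∀ r ∈ l, r ∣ m) :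
    l.foldr lcm 1 ∣ m := by
  induction l with
  | nil => simpa using one_dvd m
  | cons x l ih =>
    exact lcm_dvd (h x (List.mem_cons_self)) (ih fun r hr => h r (List.mem_cons_of_mem _ hr))

private lemma my_gcd_foldr_dvd {a m : R} {l : List R} (h : ∀ x ∈ l, gcd a x ∣ m) :
    gcd a (l.foldr lcm 1) ∣ m := by
  induction l with
  | nil =>
    simpa using ((gcd_dvd_right a 1).trans (one_dvd m))
  | cons x l ih =>
    refine (my_gcd_lcm_dvd a x (l.foldr lcm 1)).trans (lcm_dvd ?_ ?_)
    · exact h x (List.mem_cons_self)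
    · exact ih fun r hr => h r (List.mem_cons_of_mem _ hr)
end GCD

section Bezout
variable {R : Type*} [CommRing R] [IsDomain R] [IsPrincipalIdealRing R] [GCDMonoid R]

private lemma my_solve_two (b L a0 y : R) (h : gcd b L ∣ a0 - y) :
    ∃ t : R, b ∣ (y + L * t) - a0 := by
  obtain ⟨u, v, huv⟩ := IsBezout.gcd_eq_sum b L
  obtain ⟨e, he⟩ := IsBezout.associated_gcd_gcd (R := R) (x := b) (y := L)
  -- he : IsBezout.gcd b L * e = gcd b L
  obtain ⟨c, hc⟩ := h
  refine ⟨v * (e : R) * c, ⟨-(u * (e : R) * c), ?_⟩⟩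
  have : a0 - y = (u * b + v * L) * e * c := by rw [huv, he, hc]
  ring_nf
  ring_nf at this
  linear_combination -this

private lemma my_exists_sol :
    ∀ l : List (R × R), (∀ p ∈ l, ∀ q ∈ l, gcd p.2 q.2 ∣ p.1 - q.1) →
      ∃ x : R, ∀ p ∈ l, p.2 ∣ x - p.1 := by
  intro l
  induction l with
  | nil => exact fun _ => ⟨0, fun p hp => absurd hp (List.not_mem_nil)⟩
  | cons p l ih =>
    intro h
    obtain ⟨y, hy⟩ := ih fun p hp q hq =>
      h p (List.mem_cons_of_mem _ hp) q (List.mem_cons_of_mem _ hq)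
    set L := (l.map Prod.snd).foldr lcm 1 with hL
    have hgL : gcd p.2 L ∣ p.1 - y := by
      refine my_gcd_foldr_dvd fun x hx => ?_
      obtain ⟨q, hq, rfl⟩ := List.mem_map.mp hx
      have h1 : gcd p.2 q.2 ∣ p.1 - q.1 :=
        h p (List.mem_cons_self) q (List.mem_cons_of_mem _ hq)
      have h2 : gcd p.2 q.2 ∣ y - q.1 := (gcd_dvd_right _ _).trans (hy q hq)
      have : p.1 - y = (p.1 - q.1) - (y - q.1) := by ring
      rw [this]; exact dvd_sub h1 h2
    obtain ⟨t, ht⟩ := my_solve_two p.2 L p.1 y hgL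
    refine ⟨y + L * t, fun q hq => ?_⟩
    rcases List.mem_cons.mp hq with rfl | hq
    · exact ht
    · have h1 : q.2 ∣ y - q.1 := hy q hq
      have h2 : q.2 ∣ L := my_dvd_foldr_lcm (List.mem_map.mpr ⟨q, hq, rfl⟩)
      have : y + L * t - q.1 = (y - q.1) + L * t := by ring
      rw [this]
      exact dvd_add h1 (h2.mul_right t)
end Bezout

/-- Chinese Remainder Theorem over a PID. Let `n ≥ 1` and
`a b : Fin n → R` with `R` a principal ideal domain. There exists `x` with
`b i ∣ x - a i` for all `i` if and only if `gcd (b i) (b j) ∣ a i - a j` for all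
`i ≠ j`; moreover any two solutions `x, x'` satisfy
`lcm(b_1, …, b_n) ∣ x - x'`, the lcm being the iterated binary lcm. -/
theorem crt_pid {R : Type*} [CommRing R] [IsDomain R] [IsPrincipalIdealRing R]
    [GCDMonoid R] {n : ℕ} (hn : 1 ≤ n) (a b : Fin n → R) :
    ((∃ x : R, ∀ i, b i ∣ x - a i) ↔
      ∀ i j, i ≠ j → gcd (b i) (b j) ∣ a i - a j) ∧
    (∀ x x' : R, (∀ i, b i ∣ x - a i) → (∀ i, b i ∣ x' - a i) →
      ((List.ofFn b).foldr lcm 1) ∣ x - x') := by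
  constructor
  · constructor
    · rintro ⟨x, hx⟩ i j _
      have h1 : gcd (b i) (b j) ∣ x - a i := (gcd_dvd_left _ _).trans (hx i)
      have h2 : gcd (b i) (b j) ∣ x - a j := (gcd_dvd_right _ _).trans (hx j)
      have : a i - a j = (x - a j) - (x - a i) := by ring
      rw [this]; exact dvd_sub h2 h1
    · intro h
      have hpair : ∀ p ∈ List.ofFn (fun i => (a i, b i)), ∀ q ∈ List.ofFn (fun i => (a i, b i)),
          gcd p.2 q.2 ∣ p.1 - q.1 := by
        rintro p hp q hq
        obtain ⟨i, rfl⟩ := (List.mem_ofFn).mp hp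
        obtain ⟨j, rfl⟩ := (List.mem_ofFn).mp hq
        rcases eq_or_ne i j with rfl | hij
        · simp
        · exact h i j hij
      obtain ⟨x, hx⟩ := my_exists_sol (List.ofFn fun i => (a i, b i)) hpair
      exact ⟨x, fun i => hx (a i, b i) ((List.mem_ofFn).mpr ⟨i, rfl⟩)⟩
  · intro x x' hx hx'
    refine my_foldr_lcm_dvd fun r hr => ?_
    obtain ⟨i, rfl⟩ := (List.mem_ofFn).mp hr
    have : x - x' = (x - a i) - (x' - a i) := by ring
    rw [this]; exact dvd_sub (hx i) (hx' i)
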